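/- Let (Y_j(n))_{j=1}^{n-1} be independent Exponential random variables with rates λ_j(n) = 2α_j(n) > 0, and define μ_1(n) = 1/(1 + ∑_{i=1}^{n-1} exp(−∑_{j=1}^i Y_j(n))). Suppose there is a sequence c_n → 0 with c_n ≤ 1/8 and α_j(n) ≤ 2 j c_n for all j and large n. Then E[1/μ_1(n)] → 1 as n → ∞, and consequently μ_1(n) → 1 in probability. -/

import Mathlib

open MeasureTheory ProbabilityTheory Finset Filter
open scoped ENNReal NNReal

lemma exponentialPDFReal_eq (r x : ℝ) :
    exponentialPDFReal r x = if 0 ≤ x then r * Real.exp (-(r * x)) else 0 := by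
  rw [exponentialPDFReal, gammaPDFReal]
  simp only [Real.rpow_one, Real.Gamma_one, div_one, sub_self, Real.rpow_zero, mul_one]

lemma exp_integral_expMeasure {r : ℝ} (hr : 0 < r) :
    ∫ x, Real.exp (-x) ∂(expMeasure r) = r / (r + 1) := by
  have hmeas : Measurable fun x => (exponentialPDFReal r x).toNNReal :=
    (measurable_exponentialPDFReal r).real_toNNReal
  have hd : expMeasure r
      = MeasureTheory.volume.withDensity
        (fun x => ((exponentialPDFReal r x).toNNReal : ℝ≥0∞)) := rfl
  rw [hd, integral_withDensity_eq_integral_smul hmeas]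
  have hfun : ∀ x : ℝ, (exponentialPDFReal r x).toNNReal • Real.exp (-x)
      = Set.indicator (Set.Ici 0) (fun x => r * Real.exp (-((r + 1) * x))) x := by
    intro x
    rw [NNReal.smul_def, smul_eq_mul, exponentialPDFReal_eq]
    by_cases hx : (0:ℝ) ≤ x
    · rw [if_pos hx, Set.indicator_of_mem (Set.mem_Ici.2 hx),
        Real.coe_toNNReal _ (by positivity), mul_assoc, ← Real.exp_add]
      ring_nf
    · rw [if_neg hx, Set.indicator_of_notMem (by simpa using hx)]
      simp
  rw [funext hfun, integral_indicator measurableSet_Ici, integral_Ici_eq_integral_Ioi,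
    integral_const_mul]
  have h0 : 0 < r + 1 := by linarith
  have := integral_comp_mul_left_Ioi (fun x => Real.exp (-x)) 0 h0
  simp only [mul_zero] at this
  calc r * ∫ x in Set.Ioi (0:ℝ), Real.exp (-((r+1)*x))
      = r * ((r+1)⁻¹ • ∫ x in Set.Ioi (0:ℝ), Real.exp (-x)) := by rw [← this]
    _ = r / (r + 1) := by rw [integral_exp_neg_Ioi_zero, smul_eq_mul]; field_simp

lemma telescope_sum (m : ℕ) :
    ∑ i ∈ Finset.Icc 1 m, (1:ℝ)/((i+1)*(i+2)) = 1/2 - 1/(m+2) := by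
  induction m with
  | zero => simp
  | succ k ih =>
    rw [Finset.sum_Icc_succ_top (by omega), ih]
    have h1 : ((k:ℝ)+2) ≠ 0 := by positivity
    have h2 : ((k:ℝ)+3) ≠ 0 := by positivity
    push_cast
    field_simp
    ring

lemma abs_inv_one_add_sub_one_le {s : ℝ} (hs : 0 ≤ s) : |(1+s)⁻¹ - 1| ≤ s := by
  have h1s : (0:ℝ) < 1 + s := by linarith
  have heq : (1+s)⁻¹ - 1 = -(s/(1+s)) := by field_simp; ring
  rw [heq, abs_neg, abs_of_nonneg (div_nonneg hs h1s.le)]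
  exact div_le_self hs (by linarith)

/-- If `(Y_j(n))_{j=1}^{n-1}` are independent Exponentials with rates `2 α_j(n) > 0`,
`μ₁(n) = (1 + ∑_{i=1}^{n-1} exp(−∑_{j=1}^i Y_j(n)))⁻¹`, and there is a sequence `c_n → 0`
with (for large `n`) `c_n ≤ 1/8` and `α_j(n) ≤ 2 j c_n` for all `j`, then
`E[1/μ₁(n)] → 1` and hence `μ₁(n) → 1` in probability. -/
theorem mu_one_tendsto_one
    {Ω : Type*} [MeasurableSpace Ω] (P : Measure Ω) [IsProbabilityMeasure P]
    (α : ℕ → ℕ → ℝ) (hα : ∀ n, ∀ j, 1 ≤ j → j ≤ n - 1 → 0 < α n j)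
    (Y : ℕ → ℕ → Ω → ℝ) (hmeas : ∀ n j, Measurable (Y n j))
    (hindep : ∀ n, iIndepFun (Y n) P)
    (hdist : ∀ n, ∀ j, 1 ≤ j → j ≤ n - 1 →
      Measure.map (Y n j) P = expMeasure (2 * α n j))
    (c : ℕ → ℝ) (hc0 : Tendsto c atTop (nhds 0))
    (hc : ∀ᶠ n in atTop, c n ≤ 1 / 8 ∧ ∀ j, 1 ≤ j → j ≤ n - 1 → α n j ≤ 2 * j * c n)
    (μ₁ : ℕ → Ω → ℝ)
    (hμ : μ₁ = fun n ω =>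
      (1 + ∑ i ∈ Finset.Icc 1 (n - 1),
        Real.exp (-(∑ j ∈ Finset.Icc 1 i, Y n j ω)))⁻¹) :
    Tendsto (fun n => ∫ ω, (μ₁ n ω)⁻¹ ∂P) atTop (nhds 1) ∧
      TendstoInMeasure P μ₁ atTop (fun _ => 1) := by
  classical
  set S : ℕ → Ω → ℝ := fun n ω =>
    ∑ i ∈ Finset.Icc 1 (n-1), Real.exp (-(∑ j ∈ Finset.Icc 1 i, Y n j ω)) with hS
  have hS_nonneg : ∀ n ω, 0 ≤ S n ω :=
    fun n ω => Finset.sum_nonneg fun i _ => (Real.exp_pos _).le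
  have hinv : ∀ n ω, (μ₁ n ω)⁻¹ = 1 + S n ω := by
    intro n ω; rw [hμ]; simp [hS, inv_inv]
  -- a.e. nonnegativity of Y
  have hY0 : ∀ n j, 1 ≤ j → j ≤ n-1 → 0 ≤ᵐ[P] Y n j := by
    intro n j h1 h2
    have hmap : P (Y n j ⁻¹' Set.Iio 0) = 0 := by
      rw [← Measure.map_apply (hmeas n j) measurableSet_Iio, hdist n j h1 h2]
      show (MeasureTheory.volume.withDensity (gammaPDF 1 (2 * α n j))) (Set.Iio 0) = 0
      rw [withDensity_apply _ measurableSet_Iio]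
      exact lintegral_exponentialPDF_of_nonpos le_rfl
    rw [EventuallyLE, ae_iff]
    convert hmap using 2
    ext ω
    simp [not_le]
  -- integrability
  have hint : ∀ n, ∀ i ∈ Finset.Icc 1 (n-1),
      Integrable (fun ω => Real.exp (-(∑ j ∈ Finset.Icc 1 i, Y n j ω))) P := by
    intro n i hi
    obtain ⟨h1, h2⟩ := Finset.mem_Icc.1 hi
    have hsum0 : ∀ᵐ ω ∂P, 0 ≤ ∑ j ∈ Finset.Icc 1 i, Y n j ω := by
      have : ∀ᵐ ω ∂P, ∀ j ∈ Finset.Icc 1 i, 0 ≤ Y n j ω := by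
        rw [Filter.eventually_all_finset]
        intro j hj
        obtain ⟨hj1, hj2⟩ := Finset.mem_Icc.1 hj
        exact hY0 n j hj1 (hj2.trans h2)
      filter_upwards [this] with ω hω
      exact Finset.sum_nonneg hω
    have hm : Measurable fun ω => Real.exp (-(∑ j ∈ Finset.Icc 1 i, Y n j ω)) :=
      ((Finset.measurable_sum _ (fun j _ => hmeas n j)).neg).exp
    refine Integrable.mono' (integrable_const (1:ℝ)) hm.aestronglyMeasurable ?_
    filter_upwards [hsum0] with ω hω
    rw [Real.norm_eq_abs, abs_of_pos (Real.exp_pos _)]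
    exact Real.exp_le_one_iff.2 (by linarith)
  have hSint : ∀ n, Integrable (S n) P := by
    intro n
    exact integrable_finset_sum _ (hint n)
  -- value of individual integrals
  have hval : ∀ n, ∀ i ∈ Finset.Icc 1 (n-1),
      ∫ ω, Real.exp (-(∑ j ∈ Finset.Icc 1 i, Y n j ω)) ∂P
        = ∏ j ∈ Finset.Icc 1 i, (2 * α n j) / (2 * α n j + 1) := by
    intro n i hi
    obtain ⟨h1, h2⟩ := Finset.mem_Icc.1 hi
    have hmgf : ∫ ω, Real.exp (-(∑ j ∈ Finset.Icc 1 i, Y n j ω)) ∂P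
        = mgf (∑ j ∈ Finset.Icc 1 i, Y n j) P (-1) := by
      rw [mgf]
      congr 1
      funext ω
      simp [Finset.sum_apply, neg_one_mul]
    rw [hmgf, (hindep n).mgf_sum (hmeas n)]
    refine Finset.prod_congr rfl fun j hj => ?_
    obtain ⟨hj1, hj2⟩ := Finset.mem_Icc.1 hj
    have hj2' : j ≤ n - 1 := hj2.trans h2
    have hαpos : 0 < 2 * α n j := by
      have := hα n j hj1 hj2'; linarith
    rw [mgf]
    have hmap : ∫ ω, Real.exp (-1 * Y n j ω) ∂P
        = ∫ x, Real.exp (-x) ∂(Measure.map (Y n j) P) := by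
      rw [integral_map (hmeas n j).aemeasurable
        (Continuous.aestronglyMeasurable (by continuity))]
      simp [neg_one_mul]
    rw [show (fun ω => Real.exp (-1 * Y n j ω)) = fun ω => Real.exp (-1 * Y n j ω) from rfl] at *
    calc ∫ ω, Real.exp (-1 * Y n j ω) ∂P
        = ∫ x, Real.exp (-x) ∂(Measure.map (Y n j) P) := hmap
      _ = (2 * α n j) / (2 * α n j + 1) := by
          rw [hdist n j hj1 hj2', exp_integral_expMeasure hαpos]
  -- expected value of S
  have hES : ∀ n, ∫ ω, S n ω ∂P
      = ∑ i ∈ Finset.Icc 1 (n-1), ∏ j ∈ Finset.Icc 1 i, (2 * α n j) / (2 * α n j + 1) := by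
    intro n
    rw [hS, integral_finset_sum _ (hint n)]
    exact Finset.sum_congr rfl (hval n)
  -- eventual bound
  have hev : ∀ᶠ n in atTop, 0 ≤ ∫ ω, S n ω ∂P ∧ ∫ ω, S n ω ∂P ≤ 12 * c n := by
    filter_upwards [hc, eventually_ge_atTop 2] with n hn hn2
    obtain ⟨hc8, hcb⟩ := hn
    have h11 : (1:ℕ) ≤ n - 1 := by omega
    have hcpos : 0 < c n := by
      have h1 := hα n 1 le_rfl h11
      have h2 := hcb 1 le_rfl h11
      push_cast at h2
      nlinarith
    constructor
    · exact integral_nonneg (hS_nonneg n)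
    · rw [hES n]
      have hprod : ∀ i, 1 ≤ i → i ≤ n - 1 →
          ∏ j ∈ Finset.Icc 1 i, (2 * α n j) / (2 * α n j + 1)
            ≤ 24 * c n / (((i:ℝ)+1) * ((i:ℝ)+2)) := by
        intro i hi1
        induction i, hi1 using Nat.le_induction with
        | base =>
          intro _
          have h1 := hα n 1 le_rfl h11
          have h2 := hcb 1 le_rfl h11
          push_cast at h2
          rw [Finset.Icc_self, Finset.prod_singleton]
          have hd : (0:ℝ) < 2 * α n 1 + 1 := by linarith
          rw [div_le_div_iff₀ hd (by norm_num)]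
          push_cast
          nlinarith
        | succ i hi IH =>
          intro hle
          have hile : i ≤ n - 1 := by omega
          have hIH := IH hile
          have h1 := hα n (i+1) (by omega) hle
          have h2 := hcb (i+1) (by omega) hle
          push_cast at h2
          rw [Finset.prod_Icc_succ_top (by omega : 1 ≤ i + 1)]
          have hfac : (2 * α n (i+1)) / (2 * α n (i+1) + 1) ≤ ((i:ℝ)+1) / ((i:ℝ)+3) := by
            rw [div_le_div_iff₀ (by linarith) (by positivity)]
            nlinarith
          have hprodpos : (0:ℝ) ≤ ∏ j ∈ Finset.Icc 1 i, (2 * α n j) / (2 * α n j + 1) := by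
            apply Finset.prod_nonneg
            intro j hj
            obtain ⟨hj1, hj2⟩ := Finset.mem_Icc.1 hj
            have := hα n j hj1 (hj2.trans hile)
            positivity
          calc (∏ j ∈ Finset.Icc 1 i, (2 * α n j) / (2 * α n j + 1))
                * ((2 * α n (i+1)) / (2 * α n (i+1) + 1))
              ≤ (24 * c n / (((i:ℝ)+1) * ((i:ℝ)+2))) * (((i:ℝ)+1) / ((i:ℝ)+3)) := by
                apply mul_le_mul hIH hfac (by positivity) (by positivity)
            _ = 24 * c n / ((((i:ℕ):ℝ)+1+1) * (((i:ℕ):ℝ)+1+2)) := by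
                field_simp
                ring
            _ = 24 * c n / ((((i+1:ℕ):ℝ)+1) * (((i+1:ℕ):ℝ)+2)) := by push_cast; ring_nf
      calc ∑ i ∈ Finset.Icc 1 (n-1), ∏ j ∈ Finset.Icc 1 i, (2 * α n j) / (2 * α n j + 1)
          ≤ ∑ i ∈ Finset.Icc 1 (n-1), 24 * c n / (((i:ℝ)+1) * ((i:ℝ)+2)) := by
            apply Finset.sum_le_sum
            intro i hi
            obtain ⟨hi1, hi2⟩ := Finset.mem_Icc.1 hi
            exact hprod i hi1 hi2
        _ = 24 * c n * ∑ i ∈ Finset.Icc 1 (n-1), (1:ℝ)/(((i:ℝ)+1) * ((i:ℝ)+2)) := by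
            rw [Finset.mul_sum]
            exact Finset.sum_congr rfl fun i _ => by ring
        _ ≤ 24 * c n * (1/2) := by
            apply mul_le_mul_of_nonneg_left _ (by positivity)
            rw [telescope_sum]
            have : (0:ℝ) < ((n-1:ℕ):ℝ) + 2 := by positivity
            have h3 : (0:ℝ) ≤ 1 / (((n-1:ℕ):ℝ) + 2) := by positivity
            linarith
        _ ≤ 12 * c n := by linarith
  -- integral of inverse
  have hIinv : ∀ n, ∫ ω, (μ₁ n ω)⁻¹ ∂P = 1 + ∫ ω, S n ω ∂P := by
    intro n
    have : (fun ω => (μ₁ n ω)⁻¹) = fun ω => 1 + S n ω := funext (hinv n)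
    rw [this, integral_add (integrable_const 1) (hSint n), integral_const]
    simp
  have hT0 : Tendsto (fun n => ∫ ω, S n ω ∂P) atTop (nhds 0) := by
    have h12 : Tendsto (fun n => 12 * c n) atTop (nhds 0) := by
      have := hc0.const_mul (12:ℝ)
      simpa using this
    exact squeeze_zero' (hev.mono fun n h => h.1) (hev.mono fun n h => h.2) h12
  have hT1 : Tendsto (fun n => ∫ ω, (μ₁ n ω)⁻¹ ∂P) atTop (nhds 1) := by
    have : Tendsto (fun n => 1 + ∫ ω, S n ω ∂P) atTop (nhds (1 + 0)) :=
      tendsto_const_nhds.add hT0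
    rw [add_zero] at this
    exact this.congr fun n => (hIinv n).symm
  refine ⟨hT1, ?_⟩
  -- convergence in measure
  rw [tendstoInMeasure_iff_dist]
  intro ε hε
  have hdistS : ∀ n ω, dist (μ₁ n ω) 1 ≤ S n ω := by
    intro n ω
    have hs := hS_nonneg n ω
    have hμval : μ₁ n ω = (1 + S n ω)⁻¹ := by rw [hμ]
    rw [Real.dist_eq, hμval]
    exact abs_inv_one_add_sub_one_le hs
  have hbound : ∀ᶠ n in atTop,
      P {ω | ε ≤ dist (μ₁ n ω) 1} ≤ ENNReal.ofReal (ε⁻¹ * (12 * c n)) := by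
    filter_upwards [hev] with n hn
    have hsub : {ω | ε ≤ dist (μ₁ n ω) 1} ⊆ {ω | ε ≤ S n ω} :=
      fun ω hω => le_trans hω (hdistS n ω)
    refine le_trans (measure_mono hsub) ?_
    rw [ENNReal.le_ofReal_iff_toReal_le (measure_ne_top P _)
      (mul_nonneg (inv_nonneg.2 hε.le) (le_trans hn.1 hn.2))]
    have hmarkov := mul_meas_ge_le_integral_of_nonneg
      (Filter.Eventually.of_forall (hS_nonneg n)) (hSint n) ε
    have htR : (P {ω | ε ≤ S n ω}).toReal ≤ ε⁻¹ * ∫ ω, S n ω ∂P := by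
      have h' := (le_div_iff₀' hε).2 hmarkov
      calc (P {ω | ε ≤ S n ω}).toReal ≤ (∫ ω, S n ω ∂P) / ε := h'
        _ = ε⁻¹ * ∫ ω, S n ω ∂P := by ring
    calc (P {ω | ε ≤ S n ω}).toReal ≤ ε⁻¹ * ∫ ω, S n ω ∂P := htR
      _ ≤ ε⁻¹ * (12 * c n) := by
          apply mul_le_mul_of_nonneg_left hn.2 (inv_nonneg.2 hε.le)
  have hub : Tendsto (fun n => ENNReal.ofReal (ε⁻¹ * (12 * c n))) atTop (nhds 0) := by
    have h12 : Tendsto (fun n => ε⁻¹ * (12 * c n)) atTop (nhds 0) := by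
      have := (hc0.const_mul (12:ℝ)).const_mul ε⁻¹
      simpa using this
    have := (ENNReal.continuous_ofReal.tendsto 0).comp h12
    simpa [Function.comp_def] using this
  exact tendsto_of_tendsto_of_tendsto_of_le_of_le' tendsto_const_nhds hub
    (Filter.Eventually.of_forall fun n => zero_le) hbound
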